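/- Let k ∈ ℂ with k ≠ 0, and let p, q ∈ ℂ[X] be nonzero polynomials satisfying {p,q}_2 + 2k·(p'·q − 2·q'·p) = 0. Then deg p = 2·deg q. (Equivalently, the total charge n·1 + m·(−2) must vanish for a system of charges 1 and −2 to be in equilibrium in a nonzero homogeneous field.) -/

import Mathlib

open Polynomial

private lemma deriv_zero_of_natDegree_zero (f : ℂ[X]) (h : f.natDegree = 0) :
    derivative f = 0 := by
  rw [eq_C_of_natDegree_eq_zero h]; simp

/-- The total charge must vanish in a nonzero homogeneous field: if
`{p,q}_2 + 2k(p'q − 2q'p) = 0` with `k ≠ 0` then `deg p = 2·deg q`. -/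
theorem degree_eq_two_mul_degree_of_field
    (k : ℂ) (hk : k ≠ 0) (p q : ℂ[X]) (hp : p ≠ 0) (hq : q ≠ 0)
    (heq : derivative (derivative p) * q - 4 * derivative p * derivative q
        + 4 * p * derivative (derivative q)
        + 2 * C k * (derivative p * q - 2 * derivative q * p) = 0) :
    p.natDegree = 2 * q.natDegree := by
  set n := p.natDegree with hn
  set m := q.natDegree with hm
  have ha : p.coeff n ≠ 0 := by simpa [hn] using leadingCoeff_ne_zero.mpr hp
  have hb : q.coeff m ≠ 0 := by simpa [hm] using leadingCoeff_ne_zero.mpr hq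
  by_cases hn0 : n = 0
  · -- p is constant; show q is constant too
    have hdp : derivative p = 0 := deriv_zero_of_natDegree_zero p hn0
    by_cases hq' : derivative q = 0
    · have : m = 0 := natDegree_eq_zero_of_derivative_eq_zero hq'
      omega
    · exfalso
      rw [hdp] at heq
      simp only [derivative_zero, zero_mul, mul_zero, zero_sub, sub_zero] at heq
      have key : p * (4 * (derivative (derivative q) - C k * derivative q)) = 0 := by
        linear_combination heq
      have h2 : (4 : ℂ[X]) * (derivative (derivative q) - C k * derivative q) = 0 :=
        (mul_eq_zero.mp key).resolve_left hp
      have h3 : derivative (derivative q) = C k * derivative q :=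
        sub_eq_zero.mp ((mul_eq_zero.mp h2).resolve_left (by norm_num))
      have hlt : (derivative (derivative q)).degree < (C k * derivative q).degree := by
        rw [degree_C_mul hk]
        exact degree_derivative_lt hq'
      rw [h3] at hlt
      exact lt_irrefl _ hlt
  · -- n ≥ 1 : compare coefficients at degree n + m - 1
    have hn1 : 1 ≤ n := Nat.one_le_iff_ne_zero.mpr hn0
    set N := (n - 1) + m with hN
    have h := congrArg (fun f => f.coeff N) heq
    simp only [coeff_add, coeff_sub, coeff_zero] at h
    have h1 : (derivative (derivative p) * q).coeff N = 0 := by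
      by_cases hpp : derivative (derivative p) = 0
      · simp [hpp]
      · have e1 : 1 ≤ (derivative p).natDegree := by
          by_contra hc
          push_neg at hc
          exact hpp (deriv_zero_of_natDegree_zero _ (by omega)) |>.elim
        have e2 : (derivative p).natDegree ≤ n - 1 := natDegree_derivative_le p
        apply coeff_eq_zero_of_natDegree_lt
        calc (derivative (derivative p) * q).natDegree
            ≤ (derivative (derivative p)).natDegree + m := natDegree_mul_le
          _ ≤ ((derivative p).natDegree - 1) + m :=
              Nat.add_le_add_right (natDegree_derivative_le _) m
          _ < N := by omega
    have h2 : (derivative p * derivative q).coeff N = 0 := by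
      by_cases hq' : derivative q = 0
      · simp [hq']
      · have e1 : 1 ≤ m := by
          by_contra hc
          push_neg at hc
          exact hq' (deriv_zero_of_natDegree_zero _ (by omega)) |>.elim
        apply coeff_eq_zero_of_natDegree_lt
        calc (derivative p * derivative q).natDegree
            ≤ (derivative p).natDegree + (derivative q).natDegree := natDegree_mul_le
          _ ≤ (n - 1) + (m - 1) :=
              Nat.add_le_add (natDegree_derivative_le p) (natDegree_derivative_le q)
          _ < N := by omega
    have h3 : (p * derivative (derivative q)).coeff N = 0 := by
      by_cases hqq : derivative (derivative q) = 0
      · simp [hqq]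
      · have e1 : 1 ≤ (derivative q).natDegree := by
          by_contra hc
          push_neg at hc
          exact hqq (deriv_zero_of_natDegree_zero _ (by omega)) |>.elim
        have e2 : (derivative q).natDegree ≤ m - 1 := natDegree_derivative_le q
        apply coeff_eq_zero_of_natDegree_lt
        calc (p * derivative (derivative q)).natDegree
            ≤ n + (derivative (derivative q)).natDegree := natDegree_mul_le
          _ ≤ n + ((derivative q).natDegree - 1) :=
              Nat.add_le_add_left (natDegree_derivative_le _) n
          _ < N := by omega
    have h4 : (derivative p * q).coeff N = (n : ℂ) * p.coeff n * q.coeff m := by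
      rw [hN, coeff_mul_add_eq_of_natDegree_le (natDegree_derivative_le p) le_rfl,
        coeff_derivative]
      have e : n - 1 + 1 = n := by omega
      have ec : ((n - 1 : ℕ) : ℂ) = (n : ℂ) - 1 := by
        rw [Nat.cast_sub hn1]; norm_num
      rw [e, ec]
      ring
    have h5 : (derivative q * p).coeff N = (m : ℂ) * p.coeff n * q.coeff m := by
      by_cases hm0 : m = 0
      · have : derivative q = 0 := deriv_zero_of_natDegree_zero q hm0
        simp [this, hm0]
      · have hm1 : 1 ≤ m := by omega
        have hNm : N = (m - 1) + n := by omega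
        rw [hNm, coeff_mul_add_eq_of_natDegree_le (natDegree_derivative_le q) le_rfl,
          coeff_derivative]
        have e : m - 1 + 1 = m := by omega
        have ec : ((m - 1 : ℕ) : ℂ) = (m : ℂ) - 1 := by
          rw [Nat.cast_sub hm1]; norm_num
        rw [e, ec]
        ring
    have key : 2 * k * ((n : ℂ) - 2 * m) * (p.coeff n * q.coeff m) = 0 := by
      have e4 : (4 * derivative p * derivative q).coeff N = 0 := by
        rw [mul_assoc, coeff_ofNat_mul, h2, mul_zero]
      have e3 : (4 * p * derivative (derivative q)).coeff N = 0 := by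
        rw [mul_assoc, coeff_ofNat_mul, h3, mul_zero]
      have e5 : (2 * C k * (derivative p * q - 2 * derivative q * p)).coeff N
          = 2 * k * ((n : ℂ) * p.coeff n * q.coeff m
            - 2 * ((m : ℂ) * p.coeff n * q.coeff m)) := by
        rw [mul_assoc, coeff_ofNat_mul, coeff_C_mul, coeff_sub, h4, mul_assoc 2,
          coeff_ofNat_mul, h5]
        ring
      rw [h1, e4, e3, e5] at h
      linear_combination h
    have hcast : (n : ℂ) = 2 * m := by
      have h' := (mul_eq_zero.mp key).resolve_right (mul_ne_zero ha hb)
      have h'' := (mul_eq_zero.mp h').resolve_left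
        (mul_ne_zero two_ne_zero hk)
      linear_combination h''
    exact_mod_cast hcast
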